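/- The generating series of the log-Catalan numbers equals 2t / (3√(1-4t) - 1 + 4t) as a formal power series, equivalently t · d/dt log((3 - √(1-4t))/2). -/

import Mathlib

open PowerSeries

/-- The generating series `g = ∑_{n≥1} c'_n t^n` of the log-Catalan numbers
equals `2t / (3√(1-4t) - 1 + 4t)` as a formal power series, where `√(1-4t)` is the formal
power series `s` with `s² = 1-4t` and constant term `1`; equivalently it equals
`t · d/dt log((3 - √(1-4t))/2)`, i.e. `g · (3 - s) = t · (-s')`. -/
theorem stmt4 (c : ℕ → ℕ) (hc1 : c 1 = 1)
    (hrec : ∀ n, 2 ≤ n → c n = ∑ l ∈ Finset.Ico 1 n, c l * c (n - l))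
    (f : PowerSeries ℚ)
    (hf : f = PowerSeries.mk fun n => if n = 0 then 0 else (c n : ℚ))
    (c' : ℕ → ℚ) (hc'0 : c' 0 = 0)
    (hc' : (PowerSeries.mk fun n => c' n) * (1 + f) =
      PowerSeries.X * PowerSeries.derivativeFun f)
    (s : PowerSeries ℚ) (hs : s ^ 2 = 1 - 4 * PowerSeries.X)
    (hs1 : PowerSeries.constantCoeff (R := ℚ) s = 1) :
    (PowerSeries.mk fun n => c' n) * (3 * s - 1 + 4 * PowerSeries.X) =
        2 * PowerSeries.X ∧
      (PowerSeries.mk fun n => c' n) * (3 - s) =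
        PowerSeries.X * (-PowerSeries.derivativeFun s) := by
  -- Step 1: f = X + f^2
  have hfeq : f = PowerSeries.X + f ^ 2 := by
    ext n
    rcases n with _ | _ | n
    · simp [hf, pow_two, PowerSeries.coeff_mul]
    · simp [hf, pow_two, PowerSeries.coeff_mul, Finset.Nat.antidiagonal_succ, hc1]
    · rw [hf, PowerSeries.coeff_mk, map_add, pow_two, PowerSeries.coeff_mul]
      have h2 : 2 ≤ n + 2 := by omega
      rw [Finset.Nat.sum_antidiagonal_eq_sum_range_succ_mk]
      rw [if_neg (by omega), PowerSeries.coeff_X, if_neg (by omega), zero_add]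
      rw [hrec _ h2, Nat.cast_sum]
      have hsub : Finset.Ico 1 (n+2) ⊆ Finset.range (n+3) := fun x hx => by
        simp only [Finset.mem_Ico] at hx; simp only [Finset.mem_range]; omega
      rw [← Finset.sum_subset hsub]
      · apply Finset.sum_congr rfl
        intro i hi
        simp only [Finset.mem_Ico] at hi
        simp [PowerSeries.coeff_mk, if_neg (by omega : ¬ i = 0),
          if_neg (by omega : ¬ n + 2 - i = 0)]
      · intro i hi hni
        simp only [Finset.mem_range] at hi
        simp only [Finset.mem_Ico, not_and, not_lt] at hni
        have : i = 0 ∨ i = n + 2 := by omega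
        rcases this with h | h <;> simp [h, PowerSeries.coeff_mk]
  -- Step 2: s = 1 - 2f
  have hX : PowerSeries.X = f - f ^ 2 := by linear_combination -hfeq
  have hcf : PowerSeries.constantCoeff (R := ℚ) f = 0 := by
    simp [hf, ← PowerSeries.coeff_zero_eq_constantCoeff]
  have hsf : s = 1 - 2 * f := by
    have hmul : (s - (1 - 2 * f)) * (s + (1 - 2 * f)) = 0 := by
      linear_combination hs - 4 * hX
    rcases mul_eq_zero.mp hmul with h | h
    · linear_combination h
    · exfalso
      have := congrArg (PowerSeries.constantCoeff (R := ℚ)) h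
      simp [hcf, hs1] at this
  -- derivative facts
  have hds : PowerSeries.derivativeFun s = -(2 * PowerSeries.derivativeFun f) := by
    have h2 : d⁄dX ℚ s = d⁄dX ℚ 1 - d⁄dX ℚ (f + f) := by
      rw [hsf, two_mul]; exact map_sub _ _ _
    rw [PowerSeries.derivative_one, map_add, zero_sub] at h2
    change PowerSeries.derivativeFun s = -(PowerSeries.derivativeFun f + PowerSeries.derivativeFun f) at h2
    rw [h2, two_mul]
  have hkey : PowerSeries.derivativeFun f * (1 - 2 * f) = 1 := by
    have h1 : PowerSeries.derivativeFun f
        = 1 + 2 * (f * PowerSeries.derivativeFun f) := by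
      conv_lhs => rw [hfeq]
      rw [pow_two, PowerSeries.derivativeFun_add, PowerSeries.derivativeFun_mul]
      have hX' : PowerSeries.derivativeFun (PowerSeries.X : PowerSeries ℚ) = 1 :=
        PowerSeries.derivative_X
      rw [hX']; simp only [smul_eq_mul]; ring
    linear_combination h1
  constructor
  · linear_combination (3 * (PowerSeries.mk fun n => c' n)) * hsf
      - (4 * (PowerSeries.mk fun n => c' n)) * hfeq
      + (2 * (1 - 2 * f)) * hc' + (2 * PowerSeries.X) * hkey
  · linear_combination (-(PowerSeries.mk fun n => c' n)) * hsf + 2 * hc'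
      + PowerSeries.X * hds
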